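/- Let G be a finite group containing a normal subgroup N such that G/N is a nonabelian simple group in which every element has prime power order. Let q be a prime dividing |G| but not dividing |N|. Then there exists a nontrivial elementary abelian q-subgroup Q of G and an element a ∈ G, whose order is a positive power of some prime p ≠ q, such that a normalizes Q and Q = [Q,a], where [Q,a] is the subgroup generated by all commutators [u,a] with u ∈ Q. -/

import Mathlib

set_option linter.unusedSectionVars false


open Subgroup

section Helpers
variable {S : Type*} [Group S] [Finite S]

/-- le + card ge implies eq -/
lemma subgroup_eq_of_le_of_card_le {H K : Subgroup S} (h : H ≤ K)
    (hc : Nat.card K ≤ Nat.card H) : H = K := by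
  have hinj := Subgroup.inclusion_injective h
  have hb : Function.Bijective (Subgroup.inclusion h) :=
    (Nat.bijective_iff_injective_and_card _).2
      ⟨hinj, le_antisymm (Nat.card_le_card_of_injective _ hinj) hc⟩
  refine le_antisymm h fun k hk => ?_
  obtain ⟨⟨x, hx⟩, hx2⟩ := hb.2 ⟨k, hk⟩
  have : x = k := congrArg Subtype.val hx2
  exact this ▸ hx

lemma subgroup_card_lt {H K : Subgroup S} (h : H < K) : Nat.card H < Nat.card K := by
  refine lt_of_le_of_ne (Subgroup.card_le_of_le h.le) fun he => h.ne ?_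
  exact subgroup_eq_of_le_of_card_le h.le he.ge

/-- In an EPPO group, nontrivial elements of coprime prime power orders don't commute. -/
lemma eppo_not_commute (hEPPO : ∀ g : S, ∃ p k : ℕ, p.Prime ∧ orderOf g = p ^ k)
    {x y : S} {p q i j : ℕ} (hp : p.Prime) (hq : q.Prime) (hpq : p ≠ q)
    (hx : x ≠ 1) (hy : y ≠ 1) (hxo : orderOf x = p ^ i) (hyo : orderOf y = q ^ j)
    (hc : Commute x y) : False := by
  have hco : (orderOf x).Coprime (orderOf y) := by
    rw [hxo, hyo]
    exact Nat.Coprime.pow _ _ ((Nat.coprime_primes hp hq).2 hpq)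
  have hmul := hc.orderOf_mul_eq_mul_orderOf_of_coprime hco
  obtain ⟨r, k, hr, hrk⟩ := hEPPO (x * y)
  have hpd : p ∣ orderOf (x * y) := by
    rw [hmul, hxo]
    have hi : i ≠ 0 := by
      rintro rfl; simp only [pow_zero] at hxo
      exact hx (orderOf_eq_one_iff.mp hxo)
    exact Dvd.dvd.mul_right (dvd_pow_self p hi) _
  have hqd : q ∣ orderOf (x * y) := by
    rw [hmul, hyo]
    have hj : j ≠ 0 := by
      rintro rfl; simp only [pow_zero] at hyo
      exact hy (orderOf_eq_one_iff.mp hyo)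
    exact Dvd.dvd.mul_left (dvd_pow_self q hj) _
  rw [hrk] at hpd hqd
  have h1 := (Nat.prime_dvd_prime_iff_eq hp hr).1 (hp.dvd_of_dvd_pow hpd)
  have h2 := (Nat.prime_dvd_prime_iff_eq hq hr).1 (hq.dvd_of_dvd_pow hqd)
  exact hpq (h1.trans h2.symm)

/-- A nontrivial finite p-group has nontrivial abelianization. -/
lemma abelianization_nontrivial {q : ℕ} [Fact q.Prime] [Nontrivial S]
    (hS : IsPGroup q S) : Nontrivial (Abelianization S) := by
  have hnil : Group.IsNilpotent S := hS.isNilpotent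
  have hcomm : commutator S ≠ ⊤ := by
    intro htop
    obtain ⟨n, hn⟩ := _root_.nilpotent_iff_lowerCentralSeries.mp hnil
    have : ∀ m, (⊤ : Subgroup S).lowerCentralSeries m = ⊤ := by
      intro m
      induction m with
      | zero => exact Subgroup.lowerCentralSeries_zero _
      | succ k ih =>
        rw [Subgroup.lowerCentralSeries_succ, ih]
        exact htop ▸ (commutator_def S).symm
    rw [this n] at hn
    obtain ⟨x, y, hxy⟩ := exists_pair_ne S
    exact hxy (by
      have hx : x ∈ (⊥ : Subgroup S) := hn ▸ mem_top x
      have hy : y ∈ (⊥ : Subgroup S) := hn ▸ mem_top y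
      rw [mem_bot.mp hx, mem_bot.mp hy])
  obtain ⟨g, hg⟩ : ∃ g : S, g ∉ commutator S := by
    by_contra h
    push_neg at h
    exact hcomm (top_le_iff.mp fun x _ => h x)
  refine ⟨Abelianization.of g, 1, fun h => hg ?_⟩
  exact (QuotientGroup.eq_one_iff g).mp h

end Helpers
set_option linter.unusedSectionVars false

open Subgroup Pointwise

section CaseB
variable {S : Type*} [Group S] [Finite S] {q : ℕ} [Fact q.Prime]

/-- normalizer growth in q-groups -/
lemma exists_normalizing_not_mem {P D : Subgroup S} (hP : IsPGroup q P) (hD : D < P) :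
    ∃ x : S, x ∈ P ∧ x ∈ (normalizer (D : Set S)) ∧ x ∉ D := by
  have hnil : Group.IsNilpotent ↥P := hP.isNilpotent
  have hNC := normalizerCondition_of_isNilpotent (G := ↥P)
  have hlt : D.subgroupOf P < ⊤ := by
    refine lt_top_iff_ne_top.mpr fun h => ?_
    exact hD.not_ge (subgroupOf_eq_top.mp h)
  obtain ⟨x', hx'n, hx'd⟩ := SetLike.exists_of_lt (hNC _ hlt)
  refine ⟨(x' : S), x'.2, ?_, fun hm => hx'd (mem_subgroupOf.mpr hm)⟩
  rw [mem_normalizer_iff]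
  intro h
  constructor
  · intro hh
    have hhP : h ∈ P := hD.le hh
    have := (mem_normalizer_iff.mp hx'n ⟨h, hhP⟩).mp (mem_subgroupOf.mpr hh)
    exact mem_subgroupOf.mp this
  · intro hh
    have hhP : h ∈ P := by
      have h1 : (x' : S) * h * (x' : S)⁻¹ ∈ P := hD.le hh
      have := mul_mem (mul_mem (inv_mem x'.2) h1) x'.2
      simpa [mul_assoc] using this
    have := (mem_normalizer_iff.mp hx'n ⟨h, hhP⟩).mpr
      (mem_subgroupOf.mpr (by simpa using hh))
    exact mem_subgroupOf.mp this

variable (hB : ∀ R : Subgroup S, R ≠ ⊥ → IsPGroup q R → IsPGroup q (normalizer (R : Set S)))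
include hB

lemma sylow_TI_aux : ∀ (n : ℕ) (D : Subgroup S), Nat.card S ≤ Nat.card D + n →
    D ≠ ⊥ → IsPGroup q D → ∀ P₁ P₂ : Sylow q S, D ≤ P₁ → D ≤ P₂ → P₁ = P₂ := by
  have cardsy : ∀ P₁ P₂ : Sylow q S, Nat.card (P₁ : Subgroup S) = Nat.card (P₂ : Subgroup S) := by
    intro P₁ P₂; rw [Sylow.card_eq_multiplicity, Sylow.card_eq_multiplicity]
  intro n
  induction n with
  | zero =>
    intro D hcard hDb hDq P₁ P₂ h1 h2
    have h1' : D = ↑P₁ := subgroup_eq_of_le_of_card_le h1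
      (le_trans (le_trans (card_le_of_le le_top) (by rw [Subgroup.card_top])) (by simpa using hcard))
    have h2' : D = ↑P₂ := subgroup_eq_of_le_of_card_le h2
      (le_trans (le_trans (card_le_of_le le_top) (by rw [Subgroup.card_top])) (by simpa using hcard))
    exact Sylow.ext (h1' ▸ h2')
  | succ n ih =>
    intro D hcard hDb hDq P₁ P₂ h1 h2
    by_cases hc : Nat.card (P₁ : Subgroup S) ≤ Nat.card D
    · have h1' : D = ↑P₁ := subgroup_eq_of_le_of_card_le h1 hc
      have h2' : D = ↑P₂ := subgroup_eq_of_le_of_card_le h2 (cardsy P₂ P₁ ▸ hc)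
      exact Sylow.ext (h1' ▸ h2')
    · have hlt1 : D < ↑P₁ := lt_of_le_of_ne h1 (fun h => hc (h ▸ le_refl _))
      have hlt2 : D < ↑P₂ := lt_of_le_of_ne h2 (by
        intro h; rw [h] at hc; exact hc (le_of_eq (cardsy P₁ P₂)))
      have hNq : IsPGroup q (normalizer (D : Set S)) := hB D hDb hDq
      obtain ⟨P₃, hP₃⟩ := hNq.exists_le_sylow
      have key : ∀ (Pi : Sylow q S), D < ↑Pi → Pi = P₃ := by
        intro Pi hlti
        obtain ⟨x, hxP, hxn, hxd⟩ := exists_normalizing_not_mem Pi.2 hlti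
        set E : Subgroup S := ↑Pi ⊓ (normalizer (D : Set S)) with hE
        have hDE : D < E := by
          refine lt_of_le_of_ne (le_inf hlti.le le_normalizer) fun h => hxd ?_
          rw [h]; exact ⟨hxP, hxn⟩
        refine ih E ?_ (fun h => hDb (bot_unique (h ▸ hDE.le))) (Pi.2.to_inf_left)
          Pi P₃ inf_le_left (le_trans inf_le_right hP₃)
        have := subgroup_card_lt hDE
        omega
      rw [key P₁ hlt1, key P₂ hlt2]

lemma sylow_TI {D : Subgroup S} (hDb : D ≠ ⊥) (hDq : IsPGroup q D)
    {P₁ P₂ : Sylow q S} (h1 : D ≤ P₁) (h2 : D ≤ P₂) : P₁ = P₂ :=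
  sylow_TI_aux hB (Nat.card S) D (by omega) hDb hDq P₁ P₂ h1 h2

lemma sylow_self_normalizing (P : Sylow q S) (hPb : (P : Subgroup S) ≠ ⊥) :
    normalizer ((P : Subgroup S) : Set S) = P :=
  P.3 (hB _ hPb P.2) le_normalizer

lemma sylow_rigid {P : Sylow q S} (hPb : (P : Subgroup S) ≠ ⊥) {x g : S} (hx : x ∈ (P : Subgroup S))
    (hx1 : x ≠ 1) (hg : g⁻¹ * x * g ∈ (P : Subgroup S)) : g ∈ (P : Subgroup S) := by
  have hxq : ∃ k : ℕ, x ^ q ^ k = 1 := by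
    obtain ⟨k, hk⟩ := P.2 ⟨x, hx⟩
    exact ⟨k, congrArg Subtype.val hk⟩
  have hDq : IsPGroup q (zpowers x) := by
    rintro ⟨y, m, rfl⟩
    obtain ⟨k, hk⟩ := hxq
    refine ⟨k, ?_⟩
    ext
    push_cast
    rw [← zpow_natCast, ← zpow_mul, mul_comm, zpow_mul, zpow_natCast, hk, one_zpow]
  have hDb : zpowers x ≠ ⊥ := by
    simpa [ne_eq, Subgroup.zpowers_eq_bot] using hx1
  have h2 : zpowers x ≤ ↑(g • P) := by
    rw [Sylow.coe_subgroup_smul, zpowers_le]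
    rw [mem_pointwise_smul_iff_inv_smul_mem]
    simpa [MulAut.smul_def] using hg
  have := sylow_TI hB hDb hDq (zpowers_le.mpr hx) h2
  have hgn : g ∈ normalizer ((P : Subgroup S) : Set S) := by
    exact Sylow.smul_eq_iff_mem_normalizer.mp this.symm
  rwa [sylow_self_normalizing hB P hPb] at hgn

end CaseB
section Transfer
variable {S : Type*} [Group S] [Finite S] {q : ℕ} [Fact q.Prime]

open Subgroup MulAction MonoidHom Function

lemma transfer_eval (P : Sylow q S)
    (hrigid : ∀ x ∈ (P : Subgroup S), x ≠ 1 → ∀ g : S,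
      g⁻¹ * x * g ∈ (P : Subgroup S) → g ∈ (P : Subgroup S))
    (u : S) (hu : u ∈ (P : Subgroup S)) :
    (Abelianization.of (G := ↥(P : Subgroup S))).transfer u = Abelianization.of ⟨u, hu⟩ := by
  classical
  set H : Subgroup S := ↑P with hH
  set ϕ := Abelianization.of (G := ↥H) with hϕ
  letI : Fintype (Quotient (orbitRel ↥(Subgroup.zpowers u) (S ⧸ H))) := Fintype.ofFinite _
  rw [MonoidHom.transfer_eq_prod_quotient_orbitRel_zpowers_quot]
  set c₀ : Quotient (orbitRel ↥(Subgroup.zpowers u) (S ⧸ H)) :=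
    Quotient.mk'' ((1 : S) : S ⧸ H) with hc₀
  have memH_of_mk_eq : ∀ g : S, ((g : S ⧸ H) = ((1 : S) : S ⧸ H)) → g ∈ H := by
    intro g hg
    have := QuotientGroup.eq.mp hg
    simpa using this
  have mk_eq_of_memH : ∀ g : S, g ∈ H → ((g : S ⧸ H) = ((1 : S) : S ⧸ H)) := by
    intro g hg
    exact QuotientGroup.eq.mpr (by simpa using inv_mem hg)
  rw [Finset.prod_eq_single c₀]
  · -- the factor at c₀ equals of ⟨u, hu⟩
    have hout : c₀.out = ((1 : S) : S ⧸ H) := by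
      have h1 : Quotient.mk'' c₀.out = Quotient.mk'' ((1 : S) : S ⧸ H) :=
        (Quotient.out_eq' c₀)
      have hrel := Quotient.eq''.mp h1
      rw [orbitRel_apply] at hrel
      obtain ⟨z, hz⟩ := hrel
      have hzH : (z : S) ∈ H := Subgroup.zpowers_le.mpr hu z.2
      rw [← hz]
      show ((z : S) * 1 : S) = ((1 : S) : S ⧸ H)
      rw [mul_one]
      exact mk_eq_of_memH _ hzH
    revert hout
    generalize c₀.out = x
    intro hx
    subst hx
    have hg₀ : (((1 : S) : S ⧸ H)).out ∈ H :=
      memH_of_mk_eq _ (QuotientGroup.out_eq' _)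
    have hT : minimalPeriod (fun y => u • y) (((1 : S) : S ⧸ H)) = 1 := by
      rw [minimalPeriod_eq_one_iff_isFixedPt]
      show u • ((1 : S) : S ⧸ H) = ((1 : S) : S ⧸ H)
      show ((u * 1 : S) : S ⧸ H) = _
      rw [mul_one]
      exact mk_eq_of_memH _ hu
    have key : (⟨_, QuotientGroup.out_conj_pow_minimalPeriod_mem H u (((1 : S) : S ⧸ H))⟩ : ↥H)
        = ⟨_, hg₀⟩⁻¹ * ⟨u, hu⟩ * ⟨_, hg₀⟩ := by
      apply Subtype.ext
      push_cast
      rw [hT, pow_one]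
    rw [key, map_mul, map_mul, map_inv, mul_comm _ (ϕ ⟨u, hu⟩), mul_assoc, inv_mul_cancel,
      mul_one]
  · -- other factors are 1
    intro c _ hc
    by_cases hpow : u ^ minimalPeriod (fun y => u • y) c.out = 1
    · have : (⟨_, QuotientGroup.out_conj_pow_minimalPeriod_mem H u c.out⟩ : ↥H) = 1 := by
        apply Subtype.ext
        push_cast
        rw [hpow, mul_one, inv_mul_cancel]
      rw [this, map_one]
    · exfalso
      apply hc
      have hg₀ : (c.out).out ∈ H := by
        refine hrigid (u ^ minimalPeriod (fun y => u • y) c.out)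
          (pow_mem hu _) hpow (c.out).out ?_
        exact QuotientGroup.out_conj_pow_minimalPeriod_mem H u c.out
      have h2 : c.out = ((1 : S) : S ⧸ H) := by
        rw [← QuotientGroup.out_eq' c.out]
        exact mk_eq_of_memH _ hg₀
      rw [← Quotient.out_eq' c, h2, hc₀]
  · intro h
    exact absurd (Finset.mem_univ c₀) h

lemma caseB_false (hsimple : IsSimpleGroup S) (hnonab : ∃ a b : S, a * b ≠ b * a)
    (hqS : q ∣ Nat.card S)
    (hB : ∀ R : Subgroup S, R ≠ ⊥ → IsPGroup q R → IsPGroup q (normalizer (R : Set S))) : False := by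
  obtain ⟨P⟩ : Nonempty (Sylow q S) := Sylow.nonempty
  have hPb : (P : Subgroup S) ≠ ⊥ := by
    intro hbot
    have hcard := Sylow.card_eq_multiplicity P
    rw [hbot] at hcard
    have h1 : Nat.card (⊥ : Subgroup S) = 1 := Subgroup.card_bot
    rw [h1] at hcard
    have hpos : ((Nat.card S).factorization q) ≠ 0 := by
      have : 0 < (Nat.card S).factorization q :=
        Nat.Prime.factorization_pos_of_dvd Fact.out Nat.card_pos.ne' hqS
      omega
    have := hcard.symm
    rw [Nat.pow_eq_one, or_iff_left hpos] at this
    exact (Fact.out : q.Prime).one_lt.ne' this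
  have hrigid : ∀ x ∈ (P : Subgroup S), x ≠ 1 → ∀ g : S,
      g⁻¹ * x * g ∈ (P : Subgroup S) → g ∈ (P : Subgroup S) := by
    intro x hx hx1 g hg
    exact sylow_rigid hB hPb hx hx1 hg
  set ψ := (Abelianization.of (G := ↥(P : Subgroup S))).transfer with hψ
  have key := transfer_eval P hrigid
  haveI : Nontrivial ↥(P : Subgroup S) := (Subgroup.nontrivial_iff_ne_bot _).mpr hPb
  haveI : Nontrivial (Abelianization ↥(P : Subgroup S)) := abelianization_nontrivial P.2
  obtain ⟨α, hα⟩ := exists_ne (1 : Abelianization ↥(P : Subgroup S))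
  obtain ⟨v, rfl⟩ : ∃ v : ↥(P : Subgroup S), Abelianization.of v = α :=
    ⟨Quotient.out α, QuotientGroup.out_eq' α⟩
  haveI : IsSimpleGroup S := hsimple
  rcases (MonoidHom.normal_ker ψ).eq_bot_or_eq_top with hker | hker
  · -- ψ injective, so S would be abelian
    have hinj : Function.Injective ψ := (MonoidHom.ker_eq_bot_iff ψ).mp hker
    obtain ⟨a, b, hab⟩ := hnonab
    exact hab (hinj (by rw [map_mul, map_mul, mul_comm]))
  · -- ψ trivial, contradiction with value at v
    have : ψ (v : S) = 1 := by
      have : (v : S) ∈ ψ.ker := by rw [hker]; exact Subgroup.mem_top _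
      exact this
    rw [key (v : S) v.2] at this
    apply hα
    rw [← this]

end Transfer
section SLevel
open Subgroup

variable {S : Type*} [Group S] [Finite S] {q : ℕ} [Fact q.Prime]

lemma conj_pow_eq {G : Type*} [Group G] (g h : G) (n : ℕ) :
    (g * h * g⁻¹) ^ n = g * h ^ n * g⁻¹ := by
  induction n with
  | zero => group
  | succ m ih => rw [pow_succ, ih, pow_succ]; group

lemma s_level_main (hsimple : IsSimpleGroup S) (hnonab : ∃ a b : S, a * b ≠ b * a)
    (hEPPO : ∀ g : S, ∃ p k : ℕ, p.Prime ∧ orderOf g = p ^ k)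
    (hqS : q ∣ Nat.card S) :
    ∃ (Q : Subgroup S) (b : S), Q ≠ ⊥ ∧ IsPGroup q Q ∧
      (∀ x ∈ Q, ∀ y ∈ Q, x * y = y * x) ∧ (∀ x ∈ Q, x ^ q = 1) ∧
      b ∈ (normalizer (Q : Set S)) ∧ ∃ p k : ℕ, p.Prime ∧ p ≠ q ∧ 0 < k ∧ orderOf b = p ^ k := by
  by_cases hB : ∀ R : Subgroup S, R ≠ ⊥ → IsPGroup q R → IsPGroup q (normalizer (R : Set S))
  · exact absurd hB (fun h => caseB_false hsimple hnonab hqS h)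
  push_neg at hB
  obtain ⟨R, hRb, hRq, hRn⟩ := hB
  -- an element of the normalizer of non-q prime power order
  rw [IsPGroup] at hRn
  push_neg at hRn
  obtain ⟨x, hx⟩ := hRn
  set b : S := (x : S) with hbdef
  have hbmem : b ∈ (normalizer (R : Set S)) := x.2
  obtain ⟨p, k, hp, hbo⟩ := hEPPO b
  have hk : k ≠ 0 := by
    rintro rfl
    rw [pow_zero, orderOf_eq_one_iff] at hbo
    refine hx 0 ?_
    ext
    simp only [pow_zero, pow_one, OneMemClass.coe_one]
    exact hbo
  have hpq : p ≠ q := by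
    rintro rfl
    refine hx k ?_
    ext
    push_cast
    rw [← hbdef, ← hbo]
    exact pow_orderOf_eq_one b
  -- the subgroup Ω₁(Z(R))
  set C : Subgroup S := Subgroup.centralizer (R : Set S) ⊓ R with hC
  have hcomm : ∀ u ∈ C, ∀ v ∈ C, u * v = v * u := by
    intro u hu v hv
    exact (Subgroup.mem_centralizer_iff.mp (Subgroup.mem_inf.mp hu).1 v
      (Subgroup.mem_inf.mp hv).2).symm
  set Q : Subgroup S :=
    { carrier := {u : S | u ∈ C ∧ u ^ q = 1}
      one_mem' := ⟨C.one_mem, one_pow q⟩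
      mul_mem' := by
        rintro a b ⟨haC, haq⟩ ⟨hbC, hbq⟩
        refine ⟨C.mul_mem haC hbC, ?_⟩
        have hab : Commute a b := hcomm a haC b hbC
        rw [hab.mul_pow, haq, hbq, one_mul]
      inv_mem' := by
        rintro a ⟨haC, haq⟩
        exact ⟨C.inv_mem haC, by rw [inv_pow, haq, inv_one]⟩ } with hQdef
  have hQmem : ∀ u : S, u ∈ Q ↔ u ∈ C ∧ u ^ q = 1 := fun u => Iff.rfl
  -- Q is a q-group
  have hQq : IsPGroup q Q := by
    intro u
    refine ⟨1, ?_⟩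
    ext
    rw [pow_one]
    push_cast
    exact u.2.2
  -- Q is nontrivial
  have hQb : Q ≠ ⊥ := by
    haveI : Nontrivial ↥R := (Subgroup.nontrivial_iff_ne_bot R).mpr hRb
    haveI := hRq.center_nontrivial
    obtain ⟨z, hz1⟩ := exists_ne (1 : ↥(Subgroup.center ↥R))
    set z₀ : S := ((z : ↥R) : S) with hz₀
    have hz₀1 : z₀ ≠ 1 := by
      intro h
      apply hz1
      ext
      exact h
    have hz₀R : z₀ ∈ R := (z : ↥R).2
    have hz₀C : z₀ ∈ Subgroup.centralizer (R : Set S) := by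
      rw [Subgroup.mem_centralizer_iff]
      intro g hg
      have := (Subgroup.mem_center_iff.mp z.2) ⟨g, hg⟩
      exact congrArg Subtype.val this
    obtain ⟨c, hc⟩ : ∃ c : ℕ, orderOf z₀ = q ^ c := by
      obtain ⟨m, hm⟩ := hRq ⟨z₀, hz₀R⟩
      have : z₀ ^ q ^ m = 1 := congrArg Subtype.val hm
      obtain ⟨c, -, hc⟩ := (Nat.dvd_prime_pow Fact.out).mp (orderOf_dvd_of_pow_eq_one this)
      exact ⟨c, hc⟩
    have hc0 : c ≠ 0 := by
      rintro rfl
      rw [pow_zero, orderOf_eq_one_iff] at hc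
      exact hz₀1 hc
    set u : S := z₀ ^ q ^ (c - 1) with hu
    have huq : u ^ q = 1 := by
      rw [hu, ← pow_mul, ← pow_succ]
      have hcc : c - 1 + 1 = c := by omega
      rw [hcc, ← hc]
      exact pow_orderOf_eq_one z₀
    have hu1 : u ≠ 1 := by
      intro h
      have hdvd : orderOf z₀ ∣ q ^ (c - 1) := orderOf_dvd_of_pow_eq_one h
      rw [hc] at hdvd
      have := (Nat.pow_dvd_pow_iff_le_right (Fact.out : q.Prime).one_lt).mp hdvd
      omega
    have huQ : u ∈ Q := by
      refine ⟨Subgroup.mem_inf.mpr ⟨?_, ?_⟩, huq⟩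
      · exact Subgroup.pow_mem _ hz₀C _
      · exact Subgroup.pow_mem _ hz₀R _
    intro h
    rw [h, Subgroup.mem_bot] at huQ
    exact hu1 huQ
  -- b normalizes Q
  have hconj : ∀ g ∈ (normalizer (R : Set S)), ∀ h ∈ Q, g * h * g⁻¹ ∈ Q := by
    intro g hg h hh
    obtain ⟨hhC, hhq⟩ := hh
    obtain ⟨hhc, hhR⟩ := Subgroup.mem_inf.mp hhC
    refine ⟨Subgroup.mem_inf.mpr ⟨?_, ?_⟩, ?_⟩
    · rw [Subgroup.mem_centralizer_iff]
      intro r hr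
      have hr' : g⁻¹ * r * g ∈ R := by
        have := (Subgroup.mem_normalizer_iff.mp ((normalizer (R : Set S)).inv_mem hg) r).mp hr
        simpa using this
      have hcomm' : (g⁻¹ * r * g) * h = h * (g⁻¹ * r * g) :=
        Subgroup.mem_centralizer_iff.mp hhc _ hr'
      have : r * (g * h * g⁻¹) = g * ((g⁻¹ * r * g) * h) * g⁻¹ := by group
      rw [this, hcomm']
      group
    · exact (Subgroup.mem_normalizer_iff.mp hg h).mp hhR
    · rw [conj_pow_eq, hhq, mul_one, mul_inv_cancel]
  have hbQn : b ∈ (normalizer (Q : Set S)) := by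
    rw [Subgroup.mem_normalizer_iff]
    intro h
    constructor
    · exact fun hh => hconj b hbmem h hh
    · intro hh
      have := hconj b⁻¹ ((normalizer (R : Set S)).inv_mem hbmem) _ hh
      simpa [mul_assoc] using this
  exact ⟨Q, b, hQb, hQq, fun x hx y hy => hcomm x hx.1 y hy.1,
    fun x hx => hx.2, hbQn, p, k, hp, hpq, Nat.pos_of_ne_zero hk, hbo⟩

end SLevel

/-- Let `G` be a finite group with a normal subgroup `N` such that `G/N`
is a nonabelian simple EPPO-group, and let `q` be a prime dividing `|G|` but not `|N|`.
Then there are a nontrivial elementary abelian `q`-subgroup `Q` of `G` and an element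
`a ∈ G` of order a positive power of a prime `p ≠ q` normalizing `Q` with `Q = [Q,a]`. -/
theorem exists_elementary_abelian_q_subgroup
    (G : Type*) [Group G] [Finite G] (N : Subgroup G) [N.Normal]
    (hsimple : IsSimpleGroup (G ⧸ N))
    (hnonab : ∃ a b : G ⧸ N, a * b ≠ b * a)
    (hEPPO : ∀ g : G ⧸ N, ∃ p k : ℕ, p.Prime ∧ orderOf g = p ^ k)
    (q : ℕ) (hq : q.Prime) (hqG : q ∣ Nat.card G) (hqN : ¬ q ∣ Nat.card N) :
    ∃ Q : Subgroup G, Q ≠ ⊥ ∧ IsPGroup q Q ∧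
      (∀ x ∈ Q, ∀ y ∈ Q, x * y = y * x) ∧
      (∀ x ∈ Q, x ≠ 1 → orderOf x = q) ∧
      ∃ a : G, a ∈ Subgroup.normalizer (Q : Set G) ∧
        (∃ p k : ℕ, p.Prime ∧ p ≠ q ∧ 0 < k ∧ orderOf a = p ^ k) ∧
        Subgroup.closure {x : G | ∃ u ∈ Q, x = u⁻¹ * a⁻¹ * u * a} = Q := by
  haveI : Fact q.Prime := ⟨hq⟩
  set π := QuotientGroup.mk' N with hπdef
  have hπs : Function.Surjective π := QuotientGroup.mk'_surjective N
  have hqS : q ∣ Nat.card (G ⧸ N) := by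
    have hc := Subgroup.card_eq_card_quotient_mul_card_subgroup N
    rw [hc] at hqG
    exact (hq.dvd_mul.mp hqG).resolve_right hqN
  obtain ⟨Qb, b, hQbbot, hQbq, hQbcomm, hQbexp, hbn, p, k, hp, hpq, hkpos, hbo⟩ :=
    s_level_main hsimple hnonab hEPPO hqS
  haveI : Fact p.Prime := ⟨hp⟩
  set T : Subgroup (G ⧸ N) := Qb ⊔ Subgroup.zpowers b with hTdef
  have hTn : T ≤ (normalizer (Qb : Set (G ⧸ N))) :=
    sup_le Subgroup.le_normalizer (Subgroup.zpowers_le.mpr hbn)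
  set M : Subgroup G := Subgroup.comap π T with hMdef
  set K : Subgroup G := Subgroup.comap π Qb with hKdef
  have hKM : K ≤ M := Subgroup.comap_mono le_sup_left
  have hKmem : ∀ g : G, g ∈ K ↔ π g ∈ Qb := fun g => Subgroup.mem_comap
  have hKMnormal : ∀ g ∈ M, ∀ x ∈ K, g * x * g⁻¹ ∈ K := by
    intro g hg x hx
    have h1 : π g ∈ (normalizer (Qb : Set (G ⧸ N))) := hTn hg
    have h2 := (Subgroup.mem_normalizer_iff.mp h1 (π x)).mp ((hKmem x).mp hx)
    rw [hKmem, map_mul, map_mul, map_inv]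
    exact h2
  set K' : Subgroup ↥M := K.subgroupOf M with hK'def
  haveI hK'normal : K'.Normal := by
    constructor
    intro n hn g
    rw [Subgroup.mem_subgroupOf] at hn ⊢
    exact hKMnormal g g.2 n hn
  obtain ⟨Q'⟩ : Nonempty (Sylow q ↥K') := Sylow.nonempty
  set QM : Subgroup ↥M := Subgroup.map K'.subtype ↑Q' with hQMdef
  have hfr := Sylow.normalizer_sup_eq_top (N := K') Q'
  obtain ⟨y, hy⟩ := hπs b
  have hyM : y ∈ M := by
    rw [hMdef, Subgroup.mem_comap, hy]
    exact Subgroup.mem_sup_right (Subgroup.mem_zpowers b)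
  have hyTop : (⟨y, hyM⟩ : ↥M) ∈ (normalizer (QM : Set ↥M)) ⊔ K' := by
    rw [hQMdef, hfr]; trivial
  rw [← SetLike.mem_coe, Subgroup.mul_normal] at hyTop
  obtain ⟨z, hz, c, hc, hzc⟩ := hyTop
  set x₀ : G := (z : G) with hx₀def
  have hzval : z = (⟨y, hyM⟩ : ↥M) * c⁻¹ := by rw [← hzc]; group
  have hx₀val : x₀ = y * (c : G)⁻¹ := congrArg Subtype.val hzval
  set w : G ⧸ N := (π (c : G))⁻¹ with hwdef
  have hcK : (c : G) ∈ K := Subgroup.mem_subgroupOf.mp hc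
  have hw : w ∈ Qb := Qb.inv_mem ((hKmem _).mp hcK)
  have hπx₀ : π x₀ = b * w := by rw [hx₀val, map_mul, map_inv, hy, hwdef]
  set QG : Subgroup G := Subgroup.map M.subtype QM with hQGdef
  have hQMK' : QM ≤ K' := Subgroup.map_subtype_le _
  have hQGK : QG ≤ K := by
    rw [hQGdef]
    intro g hg
    obtain ⟨g', hg', rfl⟩ := Subgroup.mem_map.mp hg
    exact Subgroup.mem_subgroupOf.mp (hQMK' hg')
  -- x₀ normalizes QG
  have hzn : z ∈ (normalizer (QM : Set ↥M)) := hz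
  have hx₀n : x₀ ∈ (normalizer (QG : Set G)) := by
    rw [Subgroup.mem_normalizer_iff]
    intro h
    constructor
    · intro hh
      obtain ⟨h', hh', rfl⟩ := Subgroup.mem_map.mp hh
      exact Subgroup.mem_map.mpr
        ⟨z * h' * z⁻¹, (Subgroup.mem_normalizer_iff.mp hzn h').mp hh', rfl⟩
    · intro hh
      obtain ⟨w', hw', hweq⟩ := Subgroup.mem_map.mp hh
      have hweq' : (w' : G) = x₀ * h * x₀⁻¹ := hweq
      have hhM : h ∈ M := by
        have hrw : h = x₀⁻¹ * (w' : G) * x₀ := by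
          rw [hweq']; group
        rw [hrw]
        exact M.mul_mem (M.mul_mem (M.inv_mem z.2) w'.2) z.2
      have hkey : z * ⟨h, hhM⟩ * z⁻¹ = w' := by
        apply Subtype.ext
        exact hweq'.symm
      have : (⟨h, hhM⟩ : ↥M) ∈ QM :=
        (Subgroup.mem_normalizer_iff.mp hzn ⟨h, hhM⟩).mpr (by rw [hkey]; exact hw')
      exact Subgroup.mem_map.mpr ⟨⟨h, hhM⟩, this, rfl⟩
  -- order bookkeeping
  have haux : ∀ n : ℕ, ∃ w' ∈ Qb, (b * w) ^ n = b ^ n * w' := by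
    intro n
    induction n with
    | zero => exact ⟨1, Qb.one_mem, by simp⟩
    | succ m ih =>
      obtain ⟨w', hw', hind⟩ := ih
      refine ⟨b⁻¹ * w' * b * w, Qb.mul_mem ?_ hw, ?_⟩
      · have := (Subgroup.mem_normalizer_iff.mp ((normalizer (Qb : Set (G ⧸ N))).inv_mem hbn) w').mp hw'
        simpa using this
      · rw [pow_succ, hind, pow_succ]
        group
  have hdvd : ∀ n : ℕ, (π x₀) ^ n = 1 → p ^ k ∣ n := by
    intro n hn
    obtain ⟨w', hw', hind⟩ := haux n
    rw [hπx₀, hind] at hn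
    have hbn' : b ^ n ∈ Qb := by
      have hrw : b ^ n = w'⁻¹ := by
        rw [← mul_one (b ^ n), ← mul_inv_cancel w', ← mul_assoc, hn, one_mul]
      rw [hrw]; exact Qb.inv_mem hw'
    have hq1 : (b ^ n) ^ q = 1 := hQbexp _ hbn'
    rw [← pow_mul] at hq1
    have hdd : p ^ k ∣ n * q := by rw [← hbo]; exact orderOf_dvd_of_pow_eq_one hq1
    exact (Nat.Coprime.pow_left _ ((Nat.coprime_primes hp hq).mpr hpq)).dvd_of_dvd_mul_right hdd
  set n₀ := orderOf x₀ with hn₀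
  have hn₀pos : 0 < n₀ := orderOf_pos x₀
  have hπn₀ : (π x₀) ^ n₀ = 1 := by rw [← map_pow, pow_orderOf_eq_one, map_one]
  have hpk_n₀ : p ^ k ∣ n₀ := hdvd n₀ hπn₀
  set e := n₀.factorization p with he
  set m := n₀ / p ^ e with hm
  have hmdvd : m ∣ n₀ := Nat.ordCompl_dvd n₀ p
  have hpm : ¬ p ∣ m := Nat.not_dvd_ordCompl hp hn₀pos.ne'
  have hek : k ≤ e := (hp.pow_dvd_iff_le_factorization hn₀pos.ne').mp hpk_n₀
  have hn₀eq : p ^ e * m = n₀ := Nat.ordProj_mul_ordCompl_eq_self n₀ p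
  have hmpos : 0 < m := Nat.pos_of_dvd_of_pos hmdvd hn₀pos
  set a := x₀ ^ m with ha
  have hao : orderOf a = p ^ e := by
    rw [ha, orderOf_pow, ← hn₀, Nat.gcd_eq_right hmdvd, ← hn₀eq, Nat.mul_div_cancel _ hmpos]
  have ha_ne : π a ≠ 1 := by
    intro h1
    rw [ha, map_pow] at h1
    have hn₁ : orderOf (π x₀) ∣ m := orderOf_dvd_of_pow_eq_one h1
    have hpk' : p ^ k ∣ orderOf (π x₀) := hdvd _ (pow_orderOf_eq_one _)
    exact hpm (dvd_trans (dvd_trans (dvd_pow_self p (by omega)) hpk') hn₁)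
  have haQn : a ∈ (normalizer (QG : Set G)) := (normalizer (QG : Set G)).pow_mem hx₀n m
  have hπa_dvd : orderOf (π a) ∣ p ^ e := by rw [← hao]; exact orderOf_map_dvd π a
  obtain ⟨j, hje, hπao⟩ := (Nat.dvd_prime_pow hp).mp hπa_dvd
  have hj : j ≠ 0 := by
    rintro rfl
    rw [pow_zero, orderOf_eq_one_iff] at hπao
    exact ha_ne hπao
  -- properties of QG
  have hQGq : IsPGroup q QG := (Q'.2.map K'.subtype).map M.subtype
  have hQGN : ∀ u ∈ QG, u ≠ 1 → π u ≠ 1 := by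
    intro u hu hu1 hπu
    have huN : u ∈ N := (QuotientGroup.eq_one_iff u).mp hπu
    obtain ⟨cu, hcu⟩ := hQGq ⟨u, hu⟩
    have hcu' : u ^ q ^ cu = 1 := congrArg Subtype.val hcu
    obtain ⟨d, hd, hod⟩ := (Nat.dvd_prime_pow hq).mp (orderOf_dvd_of_pow_eq_one hcu')
    have hd0 : d ≠ 0 := by
      rintro rfl
      rw [pow_zero, orderOf_eq_one_iff] at hod
      exact hu1 hod
    refine hqN (dvd_trans ?_ (Subgroup.orderOf_dvd_natCard N huN))
    rw [hod]
    exact dvd_pow_self q hd0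
  have hπuQb : ∀ u ∈ QG, π u ∈ Qb := fun u hu => (hKmem u).mp (hQGK hu)
  have hexpq : ∀ u ∈ QG, u ^ q = 1 := by
    intro u hu
    by_contra hne
    have h1 : π (u ^ q) = 1 := by rw [map_pow]; exact hQbexp _ (hπuQb u hu)
    exact hQGN (u ^ q) (QG.pow_mem hu q) hne h1
  have hQGcomm : ∀ x ∈ QG, ∀ y ∈ QG, x * y = y * x := by
    intro x hx y hy
    by_contra hne
    have hdm : x * y * (y * x)⁻¹ ∈ QG :=
      QG.mul_mem (QG.mul_mem hx hy) (QG.inv_mem (QG.mul_mem hy hx))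
    have hne' : x * y * (y * x)⁻¹ ≠ 1 := fun h1 => hne (mul_inv_eq_one.mp h1)
    have hπ1 : π (x * y * (y * x)⁻¹) = 1 := by
      rw [map_mul, map_inv, map_mul, map_mul, hQbcomm _ (hπuQb x hx) _ (hπuQb y hy)]
      group
    exact hQGN _ hdm hne' hπ1
  have hordq : ∀ x ∈ QG, x ≠ 1 → orderOf x = q := fun x hx hx1 =>
    orderOf_eq_prime (hexpq x hx) hx1
  have hfpf : ∀ u ∈ QG, u * a = a * u → u = 1 := by
    intro u hu hcomm
    by_contra hu1
    have h1 : π u ≠ 1 := hQGN u hu hu1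
    have h2 : orderOf (π u) = q ^ 1 := by
      rw [pow_one]
      refine orderOf_eq_prime ?_ h1
      rw [← map_pow, hexpq u hu, map_one]
    have hcπ : Commute (π u) (π a) := by
      unfold Commute SemiconjBy
      rw [← map_mul, ← map_mul, hcomm]
    exact eppo_not_commute hEPPO hq hp (Ne.symm hpq) h1 ha_ne h2 hπao hcπ
  -- QG is nontrivial
  have hQGbot : QG ≠ ⊥ := by
    have hQbcard : q ∣ Nat.card Qb := by
      obtain ⟨n, hn⟩ := IsPGroup.iff_card.mp hQbq
      have hlt : 1 < Nat.card Qb := (Subgroup.one_lt_card_iff_ne_bot Qb).mpr hQbbot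
      rw [hn] at hlt ⊢
      refine dvd_pow_self q ?_
      rintro rfl
      simp at hlt
    have hmapK : Subgroup.map π K = Qb := Subgroup.map_comap_eq_self (by
      rw [MonoidHom.range_eq_top_of_surjective π hπs]
      exact le_top)
    have hKcard : q ∣ Nat.card K := by
      have hd := Subgroup.card_dvd_of_surjective (π.subgroupMap K)
        (MonoidHom.subgroupMap_surjective π K)
      rw [hmapK] at hd
      exact dvd_trans hQbcard hd
    have hK'card : Nat.card K' = Nat.card K :=
      Nat.card_congr (Subgroup.subgroupOfEquivOfLe hKM).toEquiv
    have hKP := Subgroup.card_eq_card_quotient_mul_card_subgroup (Q' : Subgroup ↥K')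
    have hnd : ¬ q ∣ Nat.card (↥K' ⧸ (Q' : Subgroup ↥K')) := by
      have hni := Q'.not_dvd_index
      rwa [Subgroup.index_eq_card] at hni
    have hQ'card : q ∣ Nat.card (Q' : Subgroup ↥K') := by
      have hdq : q ∣ Nat.card K' := by rw [hK'card]; exact hKcard
      rw [hKP] at hdq
      exact (hq.dvd_mul.mp hdq).resolve_left hnd
    have hQ'bot : (Q' : Subgroup ↥K') ≠ ⊥ := by
      intro hb
      rw [hb, Subgroup.card_bot, Nat.dvd_one] at hQ'card
      exact hq.one_lt.ne' hQ'card
    haveI := (Subgroup.nontrivial_iff_ne_bot _).mpr hQ'bot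
    obtain ⟨g₀, hg₀⟩ := exists_ne (1 : ↥(Q' : Subgroup ↥K'))
    intro hbot
    have hmem : (((g₀ : ↥K') : ↥M) : G) ∈ QG :=
      Subgroup.mem_map.mpr ⟨(g₀ : ↥K'), Subgroup.mem_map.mpr ⟨g₀, g₀.2, rfl⟩, rfl⟩
    rw [hbot, Subgroup.mem_bot] at hmem
    apply hg₀
    apply Subtype.ext
    apply Subtype.ext
    apply Subtype.ext
    exact hmem
  -- conjugation by a maps QG into itself
  have hconjmem : ∀ u ∈ QG, a⁻¹ * u * a ∈ QG := by
    intro u hu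
    have := (Subgroup.mem_normalizer_iff.mp ((normalizer (QG : Set G)).inv_mem haQn) u).mp hu
    simpa using this
  -- the commutator set equals QG
  have hseteq : {x : G | ∃ u ∈ QG, x = u⁻¹ * a⁻¹ * u * a} = (QG : Set G) := by
    ext v
    constructor
    · rintro ⟨u, hu, rfl⟩
      have h1 : a⁻¹ * u * a ∈ QG := hconjmem u hu
      have hrw : u⁻¹ * a⁻¹ * u * a = u⁻¹ * (a⁻¹ * u * a) := by group
      rw [SetLike.mem_coe, hrw]
      exact QG.mul_mem (QG.inv_mem hu) h1
    · intro hv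
      set f : ↥QG → ↥QG := fun u =>
        ⟨(u : G)⁻¹ * (a⁻¹ * (u : G) * a),
          QG.mul_mem (QG.inv_mem u.2) (hconjmem _ u.2)⟩ with hf
      have hfinj : Function.Injective f := by
        intro u₁ u₂ h12
        have hval : (u₁ : G)⁻¹ * (a⁻¹ * (u₁ : G) * a)
            = (u₂ : G)⁻¹ * (a⁻¹ * (u₂ : G) * a) := congrArg Subtype.val h12
        have hw2 : a⁻¹ * ((u₂ : G) * (u₁ : G)⁻¹) * a = (u₂ : G) * (u₁ : G)⁻¹ := by
          calc a⁻¹ * ((u₂ : G) * (u₁ : G)⁻¹) * a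
              = ((u₂ : G) * ((u₂ : G)⁻¹ * (a⁻¹ * (u₂ : G) * a)))
                * (((u₁ : G)) * ((u₁ : G)⁻¹ * (a⁻¹ * (u₁ : G) * a)))⁻¹ := by group
            _ = ((u₂ : G) * ((u₁ : G)⁻¹ * (a⁻¹ * (u₁ : G) * a)))
                * (((u₁ : G)) * ((u₁ : G)⁻¹ * (a⁻¹ * (u₁ : G) * a)))⁻¹ := by rw [← hval]
            _ = (u₂ : G) * (u₁ : G)⁻¹ := by group
        have hcab : ((u₂ : G) * (u₁ : G)⁻¹) * a = a * ((u₂ : G) * (u₁ : G)⁻¹) := by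
          calc ((u₂ : G) * (u₁ : G)⁻¹) * a
              = a * (a⁻¹ * ((u₂ : G) * (u₁ : G)⁻¹) * a) := by group
            _ = a * ((u₂ : G) * (u₁ : G)⁻¹) := by rw [hw2]
        have hone := hfpf _ (QG.mul_mem u₂.2 (QG.inv_mem u₁.2)) hcab
        have := mul_inv_eq_one.mp hone
        exact Subtype.ext this.symm
      obtain ⟨u, hu_eq⟩ := Finite.surjective_of_injective hfinj ⟨v, hv⟩
      refine ⟨(u : G), u.2, ?_⟩
      have hval : (u : G)⁻¹ * (a⁻¹ * (u : G) * a) = v := congrArg Subtype.val hu_eq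
      rw [← hval]
      group
  refine ⟨QG, hQGbot, hQGq, hQGcomm, hordq, a, haQn,
    ⟨p, e, hp, hpq, by omega, hao⟩, ?_⟩
  rw [hseteq]
  exact Subgroup.closure_eq QG
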